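/- Let N ≥ 3 be prime. Then ℝ^(N×N) is the internal direct sum of the subspaces V_k over k in the index set I: every x ∈ ℝ^(N×N) is a sum of elements of the V_k, k ∈ I, and this decomposition is direct (equivalently, the dimensions of the V_k, k ∈ I, add up to N² and their sum is all of ℝ^(N×N)). -/

import Mathlib

open Complex Finset

/-- The generating vector of `V_k`: `x_{α,β} = Re(z · exp(2πi(αk₁+βk₂)/N))`. -/
noncomputable def vkFun (N : ℕ) (k : ℤ × ℤ) (z : ℂ) : ZMod N × ZMod N → ℝ :=
  fun p => (z * Complex.exp (2 * Real.pi * Complex.I *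
    (((p.1.val : ℂ) * (k.1 : ℂ) + (p.2.val : ℂ) * (k.2 : ℂ)) / (N : ℂ)))).re

/-- The subspace `V_k ⊆ ℝ^{N×N}`, as a set. -/
def VkSet (N : ℕ) (k : ℤ × ℤ) : Set (ZMod N × ZMod N → ℝ) :=
  {x | ∃ z : ℂ, x = vkFun N k z}

/-- The index set `I`. -/
def idxI (N : ℕ) (k : ℤ × ℤ) : Prop :=
  k = (0, 0) ∨
  (k.1 = 0 ∧ 1 ≤ k.2 ∧ k.2 ≤ ((N : ℤ) - 1) / 2) ∨
  (k.2 = 0 ∧ 1 ≤ k.1 ∧ k.1 ≤ ((N : ℤ) - 1) / 2) ∨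
  (k.1 = k.2 ∧ 1 ≤ k.1 ∧ k.1 ≤ ((N : ℤ) - 1) / 2) ∨
  (1 ≤ k.2 ∧ k.2 < k.1 ∧ k.1 ≤ (N : ℤ) - 1)

/-! ### Auxiliary lemmas: exponentials -/

noncomputable def eC (N : ℕ) (m : ℤ) : ℂ := Complex.exp (2 * Real.pi * Complex.I * m / N)

lemma eC_add (N : ℕ) (hN : (N:ℂ) ≠ 0) (m n : ℤ) : eC N (m + n) = eC N m * eC N n := by
  rw [eC, eC, eC, ← Complex.exp_add]
  congr 1
  push_cast
  field_simp

lemma eC_mul_N (N : ℕ) (hN : (N:ℂ) ≠ 0) (t : ℤ) : eC N ((N:ℤ) * t) = 1 := by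
  rw [eC, show 2 * (Real.pi:ℂ) * Complex.I * (((N:ℤ) * t : ℤ):ℂ) / N = (t:ℤ) * (2 * Real.pi * Complex.I) by push_cast; field_simp]
  exact Complex.exp_int_mul_two_pi_mul_I t

lemma eC_congr (N : ℕ) (hN : (N:ℂ) ≠ 0) {m n : ℤ} (h : (N:ℤ) ∣ m - n) : eC N m = eC N n := by
  obtain ⟨t, ht⟩ := h
  have hm : m = n + (N:ℤ) * t := by omega
  rw [hm, eC_add N hN, eC_mul_N N hN, mul_one]

lemma eC_conj (N : ℕ) (m : ℤ) : (starRingEnd ℂ) (eC N m) = eC N (-m) := by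
  rw [eC, eC, ← Complex.exp_conj]
  congr 1
  simp only [map_div₀, map_mul, Complex.conj_I, Complex.conj_ofNat]
  push_cast
  simp [Complex.conj_ofReal]

lemma eC_pow (N : ℕ) (hN : (N:ℂ) ≠ 0) (c : ℕ) (m : ℤ) : eC N ((c:ℤ) * m) = eC N m ^ c := by
  rw [eC, eC, ← Complex.exp_nat_mul]
  congr 1
  push_cast
  field_simp

lemma eC_eq_one_iff (N : ℕ) (hN0 : 0 < N) (m : ℤ) : eC N m = 1 ↔ (N:ℤ) ∣ m := by
  have hNc : (N:ℂ) ≠ 0 := Nat.cast_ne_zero.mpr hN0.ne'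
  have hpi : (Real.pi:ℂ) ≠ 0 := Complex.ofReal_ne_zero.mpr Real.pi_ne_zero
  rw [eC, Complex.exp_eq_one_iff]
  constructor
  · rintro ⟨t, ht⟩
    have h2pi : (2 * (Real.pi:ℂ) * Complex.I) ≠ 0 := by
      simp [Real.pi_ne_zero, Complex.I_ne_zero, hpi]
    have h2 : (m:ℂ) = (t:ℂ) * N := by
      apply mul_left_cancel₀ h2pi
      field_simp at ht
      linear_combination (2 * (Real.pi:ℂ) * Complex.I) * ht
    have h3 : m = t * (N:ℤ) := by exact_mod_cast h2
    exact ⟨t, by rw [h3, mul_comm]⟩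
  · rintro ⟨t, rfl⟩
    exact ⟨t, by push_cast; field_simp⟩

lemma sum_eC (N : ℕ) [NeZero N] (m : ℤ) :
    ∑ a : ZMod N, eC N ((a.val : ℤ) * m) = if (N:ℤ) ∣ m then (N:ℂ) else 0 := by
  have hN0 : 0 < N := Nat.pos_of_ne_zero (NeZero.ne N)
  have hNc : (N:ℂ) ≠ 0 := Nat.cast_ne_zero.mpr hN0.ne'
  have h1 : ∑ a : ZMod N, eC N ((a.val : ℤ) * m) = ∑ i ∈ Finset.range N, eC N m ^ i := by
    rw [Finset.sum_bij' (fun (a : ZMod N) (_ : a ∈ univ) => a.val)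
      (fun (i : ℕ) (_ : i ∈ Finset.range N) => (i : ZMod N))]
    · intro a _; exact Finset.mem_range.mpr (ZMod.val_lt a)
    · intro i _; exact Finset.mem_univ _
    · intro a _; simp [ZMod.natCast_val, ZMod.cast_id]
    · intro i hi; exact ZMod.val_cast_of_lt (Finset.mem_range.mp hi)
    · intro a _; exact eC_pow N hNc a.val m
  rw [h1]
  by_cases h : (N:ℤ) ∣ m
  · have : eC N m = 1 := (eC_eq_one_iff N hN0 m).mpr h
    simp [this, h]
  · have hne : eC N m ≠ 1 := fun hc => h ((eC_eq_one_iff N hN0 m).mp hc)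
    rw [if_neg h, geom_sum_eq hne]
    have : eC N m ^ N = 1 := by
      rw [← eC_pow N hNc N m, show ((N:ℕ):ℤ) * m = (N:ℤ) * m from rfl, eC_mul_N N hNc]
    rw [this]
    simp

lemma sum2 (N : ℕ) [NeZero N] (u v : ℤ) :
    ∑ p : ZMod N × ZMod N, eC N ((p.1.val : ℤ) * u + (p.2.val : ℤ) * v)
      = (if (N:ℤ) ∣ u then (N:ℂ) else 0) * (if (N:ℤ) ∣ v then (N:ℂ) else 0) := by
  have hN0 : 0 < N := Nat.pos_of_ne_zero (NeZero.ne N)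
  have hNc : (N:ℂ) ≠ 0 := Nat.cast_ne_zero.mpr hN0.ne'
  rw [← sum_eC N u, ← sum_eC N v, Finset.sum_mul_sum, Fintype.sum_prod_type]
  exact Finset.sum_congr rfl fun a _ => Finset.sum_congr rfl fun b _ => eC_add N hNc _ _

/-! ### vkFun basics -/

lemma vkFun_eq (N : ℕ) (k : ℤ × ℤ) (z : ℂ) (p : ZMod N × ZMod N) :
    vkFun N k z p = (z * eC N ((p.1.val : ℤ) * k.1 + (p.2.val : ℤ) * k.2)).re := by
  rw [vkFun, eC]
  congr 3
  push_cast
  ring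

/-- `vkFun` as an `ℝ`-linear map in `z`. -/
noncomputable def vkL (N : ℕ) (k : ℤ × ℤ) : ℂ →ₗ[ℝ] (ZMod N × ZMod N → ℝ) where
  toFun := vkFun N k
  map_add' z w := by funext p; simp [vkFun, add_mul, Complex.add_re]
  map_smul' c z := by
    funext p
    simp only [vkFun, RingHom.id_apply, Pi.smul_apply, smul_eq_mul]
    rw [smul_mul_assoc, Complex.smul_re, smul_eq_mul]

lemma vkFun_congr (N : ℕ) (hN : (N:ℂ) ≠ 0) {k l : ℤ × ℤ}
    (h1 : (N:ℤ) ∣ k.1 - l.1) (h2 : (N:ℤ) ∣ k.2 - l.2) (z : ℂ) :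
    vkFun N k z = vkFun N l z := by
  funext p
  rw [vkFun_eq, vkFun_eq]
  obtain ⟨c1, hc1⟩ := h1
  obtain ⟨c2, hc2⟩ := h2
  rw [eC_congr N hN (show (N:ℤ) ∣ ((p.1.val:ℤ) * k.1 + (p.2.val:ℤ) * k.2) -
      ((p.1.val:ℤ) * l.1 + (p.2.val:ℤ) * l.2) from
    ⟨(p.1.val:ℤ) * c1 + (p.2.val:ℤ) * c2, by linear_combination (p.1.val:ℤ) * hc1 + (p.2.val:ℤ) * hc2⟩)]

lemma vkFun_congr_neg (N : ℕ) (hN : (N:ℂ) ≠ 0) {k l : ℤ × ℤ}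
    (h1 : (N:ℤ) ∣ k.1 + l.1) (h2 : (N:ℤ) ∣ k.2 + l.2) (z : ℂ) :
    vkFun N k z = vkFun N l ((starRingEnd ℂ) z) := by
  funext p
  rw [vkFun_eq, vkFun_eq, ← Complex.conj_re (z * eC N _), map_mul, eC_conj]
  obtain ⟨c1, hc1⟩ := h1
  obtain ⟨c2, hc2⟩ := h2
  rw [eC_congr N hN (show (N:ℤ) ∣ (-((p.1.val:ℤ) * k.1 + (p.2.val:ℤ) * k.2)) -
      ((p.1.val:ℤ) * l.1 + (p.2.val:ℤ) * l.2) from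
    ⟨-((p.1.val:ℤ) * c1 + (p.2.val:ℤ) * c2), by linear_combination (-(p.1.val:ℤ)) * hc1 + (-(p.2.val:ℤ)) * hc2⟩)]

lemma re_mul_re (A B : ℂ) : A.re * B.re = ((A * B).re + (A * (starRingEnd ℂ) B).re) / 2 := by
  simp [Complex.mul_re, Complex.conj_re, Complex.conj_im]

lemma re_mul_re_eC (N : ℕ) (hNc : (N:ℂ) ≠ 0) (a b : ℤ) (z w : ℂ) :
    (z * eC N a).re * (w * eC N b).re
      = ((z * w * eC N (a + b)).re + (z * (starRingEnd ℂ) w * eC N (a - b)).re) / 2 := by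
  rw [re_mul_re]
  congr 2
  · rw [eC_add N hNc a b]; ring
  · rw [map_mul, eC_conj, show a - b = a + (-b) from by ring, eC_add N hNc]; ring

/-! ### Orthogonality -/

lemma ortho (N : ℕ) [NeZero N] {k l : ℤ × ℤ}
    (hdiff : ¬((N:ℤ) ∣ k.1 - l.1 ∧ (N:ℤ) ∣ k.2 - l.2))
    (hsum : ¬((N:ℤ) ∣ k.1 + l.1 ∧ (N:ℤ) ∣ k.2 + l.2)) (z w : ℂ) :
    ∑ p : ZMod N × ZMod N, vkFun N k z p * vkFun N l w p = 0 := by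
  have hN0 : 0 < N := Nat.pos_of_ne_zero (NeZero.ne N)
  have hNc : (N:ℂ) ≠ 0 := Nat.cast_ne_zero.mpr hN0.ne'
  have key : ∀ p : ZMod N × ZMod N, vkFun N k z p * vkFun N l w p =
      ((z * w * eC N ((p.1.val:ℤ) * (k.1 + l.1) + (p.2.val:ℤ) * (k.2 + l.2))).re
        + (z * (starRingEnd ℂ) w * eC N ((p.1.val:ℤ) * (k.1 - l.1) + (p.2.val:ℤ) * (k.2 - l.2))).re) / 2 := by
    intro p
    rw [vkFun_eq, vkFun_eq, re_mul_re_eC N hNc,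
      show ((p.1.val:ℤ) * k.1 + (p.2.val:ℤ) * k.2) + ((p.1.val:ℤ) * l.1 + (p.2.val:ℤ) * l.2)
        = (p.1.val:ℤ) * (k.1 + l.1) + (p.2.val:ℤ) * (k.2 + l.2) from by ring,
      show ((p.1.val:ℤ) * k.1 + (p.2.val:ℤ) * k.2) - ((p.1.val:ℤ) * l.1 + (p.2.val:ℤ) * l.2)
        = (p.1.val:ℤ) * (k.1 - l.1) + (p.2.val:ℤ) * (k.2 - l.2) from by ring]
  simp_rw [key]
  rw [← Finset.sum_div, Finset.sum_add_distrib, ← Complex.re_sum, ← Complex.re_sum,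
    ← Finset.mul_sum, ← Finset.mul_sum, sum2, sum2]
  have e1 : (if (N:ℤ) ∣ k.1 + l.1 then (N:ℂ) else 0) * (if (N:ℤ) ∣ k.2 + l.2 then (N:ℂ) else 0) = 0 := by
    by_cases h1 : (N:ℤ) ∣ k.1 + l.1
    · rw [if_neg (fun h2 => hsum ⟨h1, h2⟩), mul_zero]
    · rw [if_neg h1, zero_mul]
  have e2 : (if (N:ℤ) ∣ k.1 - l.1 then (N:ℂ) else 0) * (if (N:ℤ) ∣ k.2 - l.2 then (N:ℂ) else 0) = 0 := by
    by_cases h1 : (N:ℤ) ∣ k.1 - l.1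
    · rw [if_neg (fun h2 => hdiff ⟨h1, h2⟩), mul_zero]
    · rw [if_neg h1, zero_mul]
  rw [e1, e2]
  simp

/-! ### Delta functions -/

lemma int_dvd_bounded {M d : ℤ} (h : M ∣ d) (h1 : -M < d) (h2 : d < M) : d = 0 := by
  obtain ⟨c, rfl⟩ := h
  have hM : 0 < M := by nlinarith
  rcases lt_trichotomy c 0 with hc | hc | hc
  · nlinarith
  · simp [hc]
  · nlinarith

lemma dvd_val_sub_iff (N : ℕ) [NeZero N] (x y : ZMod N) :
    (N:ℤ) ∣ (x.val : ℤ) - (y.val : ℤ) ↔ x = y := by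
  constructor
  · intro h
    have hx := ZMod.val_lt x
    have hy := ZMod.val_lt y
    have h0 := int_dvd_bounded h (by omega) (by omega)
    have : (x.val : ℤ) = (y.val : ℤ) := by omega
    have : x.val = y.val := by exact_mod_cast this
    exact ZMod.val_injective N this
  · rintro rfl; simp

lemma delta_sum (N : ℕ) [NeZero N] (q : ZMod N × ZMod N) :
    ∑ g : ZMod N × ZMod N, vkFun N ((g.1.val : ℤ), (g.2.val : ℤ))
        (((N:ℂ) ^ 2)⁻¹ * eC N (-((q.1.val : ℤ) * (g.1.val : ℤ) + (q.2.val : ℤ) * (g.2.val : ℤ))))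
      = fun p => if q = p then (1:ℝ) else 0 := by
  have hN0 : 0 < N := Nat.pos_of_ne_zero (NeZero.ne N)
  have hNc : (N:ℂ) ≠ 0 := Nat.cast_ne_zero.mpr hN0.ne'
  funext p
  rw [Finset.sum_apply]
  have key : ∀ g : ZMod N × ZMod N,
      vkFun N ((g.1.val : ℤ), (g.2.val : ℤ))
        (((N:ℂ) ^ 2)⁻¹ * eC N (-((q.1.val : ℤ) * (g.1.val : ℤ) + (q.2.val : ℤ) * (g.2.val : ℤ)))) p
      = (((N:ℂ) ^ 2)⁻¹ * eC N ((g.1.val : ℤ) * ((p.1.val : ℤ) - (q.1.val : ℤ))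
          + (g.2.val : ℤ) * ((p.2.val : ℤ) - (q.2.val : ℤ)))).re := by
    intro g
    rw [vkFun_eq, mul_assoc, ← eC_add N hNc]
    congr 2
    push_cast
    ring
  simp_rw [key]
  rw [← Complex.re_sum, ← Finset.mul_sum, sum2 N]
  simp only [dvd_val_sub_iff]
  rcases eq_or_ne q p with rfl | h
  · rw [if_pos rfl, if_pos rfl, if_pos rfl,
      show ((N:ℂ) ^ 2)⁻¹ * ((N:ℂ) * (N:ℂ)) = 1 from by field_simp]
    simp
  · rw [if_neg h]
    by_cases h1 : p.1 = q.1
    · rw [if_pos h1, if_neg (fun h2 => h (Prod.ext h1.symm h2.symm)), mul_zero, mul_zero,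
        Complex.zero_re]
    · rw [if_neg h1, zero_mul, mul_zero, Complex.zero_re]

/-! ### Combinatorics of the index set -/

lemma int_dvd_sum_cases {M s : ℤ} (h : M ∣ s) (h1 : 0 ≤ s) (h2 : s < 2 * M) : s = 0 ∨ s = M := by
  obtain ⟨c, rfl⟩ := h
  have hM : 0 < M := by nlinarith
  rcases lt_trichotomy c 0 with hc | hc | hc
  · nlinarith
  · simp [hc]
  · rcases lt_trichotomy c 1 with hc' | hc' | hc'
    · omega
    · simp [hc']
    · nlinarith

lemma idx_bounds {N : ℕ} (h3 : 3 ≤ N) {k : ℤ × ℤ} (hk : idxI N k) :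
    0 ≤ k.1 ∧ k.1 ≤ (N:ℤ) - 1 ∧ 0 ≤ k.2 ∧ k.2 ≤ (N:ℤ) - 1 := by
  obtain ⟨k1, k2⟩ := k
  unfold idxI at hk
  simp only [Prod.mk.injEq] at hk ⊢
  omega

lemma idx_distinct {N : ℕ} (h3 : 3 ≤ N) (hodd : N % 2 = 1) {j k : ℤ × ℤ}
    (hj : idxI N j) (hk : idxI N k) (hne : j ≠ k) :
    ¬((N:ℤ) ∣ j.1 - k.1 ∧ (N:ℤ) ∣ j.2 - k.2) ∧ ¬((N:ℤ) ∣ j.1 + k.1 ∧ (N:ℤ) ∣ j.2 + k.2) := by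
  have hbj := idx_bounds h3 hj
  have hbk := idx_bounds h3 hk
  constructor
  · rintro ⟨h1, h2⟩
    have e1 := int_dvd_bounded h1 (by omega) (by omega)
    have e2 := int_dvd_bounded h2 (by omega) (by omega)
    exact hne (Prod.ext (by omega) (by omega))
  · rintro ⟨h1, h2⟩
    have e1 := int_dvd_sum_cases h1 (by omega) (by omega)
    have e2 := int_dvd_sum_cases h2 (by omega) (by omega)
    obtain ⟨j1, j2⟩ := j
    obtain ⟨k1, k2⟩ := k
    unfold idxI at hj hk
    simp only [Prod.mk.injEq, ne_eq] at hj hk hne e1 e2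
    omega

lemma rep_exists {N : ℕ} (h3 : 3 ≤ N) (hodd : N % 2 = 1) (a b : ℤ)
    (ha : 0 ≤ a) (ha' : a < N) (hb : 0 ≤ b) (hb' : b < N) :
    ∃ j : ℤ × ℤ, idxI N j ∧
      (((N:ℤ) ∣ a - j.1 ∧ (N:ℤ) ∣ b - j.2) ∨ ((N:ℤ) ∣ a + j.1 ∧ (N:ℤ) ∣ b + j.2)) := by
  by_cases h1 : 1 ≤ b ∧ b < a
  · exact ⟨(a, b), Or.inr (Or.inr (Or.inr (Or.inr ⟨h1.1, h1.2, by omega⟩))),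
      Or.inl ⟨⟨0, by ring⟩, ⟨0, by ring⟩⟩⟩
  by_cases h2 : 1 ≤ a ∧ a < b
  · exact ⟨((N:ℤ) - a, (N:ℤ) - b), Or.inr (Or.inr (Or.inr (Or.inr ⟨by omega, by omega, by omega⟩))),
      Or.inr ⟨⟨1, by ring⟩, ⟨1, by ring⟩⟩⟩
  by_cases h0 : a = 0 ∧ b = 0
  · exact ⟨(0, 0), Or.inl rfl, Or.inl ⟨⟨0, by omega⟩, ⟨0, by omega⟩⟩⟩
  by_cases ha0 : a = 0
  · by_cases hb4 : b ≤ ((N:ℤ) - 1) / 2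
    · exact ⟨(0, b), Or.inr (Or.inl ⟨rfl, by omega, hb4⟩),
        Or.inl ⟨⟨0, by omega⟩, ⟨0, by ring⟩⟩⟩
    · exact ⟨(0, (N:ℤ) - b), Or.inr (Or.inl ⟨rfl, by omega, by omega⟩),
        Or.inr ⟨⟨0, by omega⟩, ⟨1, by ring⟩⟩⟩
  by_cases hb0 : b = 0
  · by_cases ha4 : a ≤ ((N:ℤ) - 1) / 2
    · exact ⟨(a, 0), Or.inr (Or.inr (Or.inl ⟨rfl, by omega, ha4⟩)),
        Or.inl ⟨⟨0, by ring⟩, ⟨0, by omega⟩⟩⟩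
    · exact ⟨((N:ℤ) - a, 0), Or.inr (Or.inr (Or.inl ⟨rfl, by omega, by omega⟩)),
        Or.inr ⟨⟨1, by ring⟩, ⟨0, by omega⟩⟩⟩
  · have hab : a = b := by omega
    by_cases ha4 : a ≤ ((N:ℤ) - 1) / 2
    · exact ⟨(a, a), Or.inr (Or.inr (Or.inr (Or.inl ⟨rfl, by omega, ha4⟩))),
        Or.inl ⟨⟨0, by ring⟩, ⟨0, by omega⟩⟩⟩
    · exact ⟨((N:ℤ) - a, (N:ℤ) - a), Or.inr (Or.inr (Or.inr (Or.inl ⟨rfl, by omega, by omega⟩))),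
        Or.inr ⟨⟨1, by ring⟩, ⟨1, by omega⟩⟩⟩

/-! ### Main theorem -/

/-- `ℝ^{N×N}` is the internal direct sum of the subspaces `V_k`, `k ∈ I`. -/
theorem stmt4 (N : ℕ) (hN : N.Prime) (h3 : 3 ≤ N) :
    ∃ W : {k : ℤ × ℤ // idxI N k} → Submodule ℝ (ZMod N × ZMod N → ℝ),
      (∀ k : {k : ℤ × ℤ // idxI N k},
        (W k : Set (ZMod N × ZMod N → ℝ)) = VkSet N k.1) ∧
      DirectSum.IsInternal W := by
  classical
  haveI : NeZero N := ⟨hN.pos.ne'⟩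
  have hodd : N % 2 = 1 := Nat.odd_iff.mp (hN.odd_of_ne_two (by omega))
  have hN0 : 0 < N := hN.pos
  have hNc : (N:ℂ) ≠ 0 := Nat.cast_ne_zero.mpr hN0.ne'
  refine ⟨fun k => LinearMap.range (vkL N k.1), fun k => ?_, ?_⟩
  · ext x
    simp only [SetLike.mem_coe, LinearMap.mem_range, VkSet, Set.mem_setOf_eq]
    exact ⟨fun ⟨z, hz⟩ => ⟨z, hz.symm⟩, fun ⟨z, hz⟩ => ⟨z, hz.symm⟩⟩
  · apply DirectSum.isInternal_submodule_of_iSupIndep_of_iSup_eq_top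
    · -- independence
      intro i
      rw [Submodule.disjoint_def]
      intro x hxi hxsup
      obtain ⟨z, hz⟩ := hxi
      set L : (ZMod N × ZMod N → ℝ) →ₗ[ℝ] ℝ :=
        { toFun := fun y => ∑ p, x p * y p
          map_add' := fun y w => by simp [mul_add, Finset.sum_add_distrib]
          map_smul' := fun c y => by
            simp only [Pi.smul_apply, smul_eq_mul, RingHom.id_apply, Finset.mul_sum]
            exact Finset.sum_congr rfl fun p _ => by ring } with hL
      have hker : (⨆ j, ⨆ (_ : j ≠ i), LinearMap.range (vkL N j.1)) ≤ LinearMap.ker L := by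
        refine iSup_le fun j => iSup_le fun hj => ?_
        rintro y ⟨w, rfl⟩
        have hd := idx_distinct h3 hodd i.2 j.2 (fun hc => hj (Subtype.ext hc.symm))
        rw [LinearMap.mem_ker, hL]
        show ∑ p, x p * vkFun N j.1 w p = 0
        rw [← hz]
        exact ortho N hd.1 hd.2 z w
      have h0 : ∑ p, x p * x p = 0 := by
        have := hker hxsup
        rw [LinearMap.mem_ker, hL] at this
        exact this
      funext p
      have hp := (Finset.sum_eq_zero_iff_of_nonneg
        (fun q _ => mul_self_nonneg (x q))).mp h0 p (Finset.mem_univ p)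
      exact mul_self_eq_zero.mp hp
    · -- spanning
      rw [eq_top_iff]
      intro x _
      rw [pi_eq_sum_univ x]
      refine Submodule.sum_mem _ fun q _ => Submodule.smul_mem _ _ ?_
      rw [← delta_sum N q]
      refine Submodule.sum_mem _ fun g _ => ?_
      obtain ⟨j, hj, hcong⟩ := rep_exists h3 hodd (g.1.val : ℤ) (g.2.val : ℤ)
        (Int.ofNat_nonneg _) (by exact_mod_cast ZMod.val_lt g.1)
        (Int.ofNat_nonneg _) (by exact_mod_cast ZMod.val_lt g.2)
      set z : ℂ := ((N:ℂ) ^ 2)⁻¹ *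
        eC N (-((q.1.val : ℤ) * (g.1.val : ℤ) + (q.2.val : ℤ) * (g.2.val : ℤ))) with hzdef
      rcases hcong with ⟨hd1, hd2⟩ | ⟨hs1, hs2⟩
      · rw [show vkFun N ((g.1.val : ℤ), (g.2.val : ℤ)) z = vkFun N j z from
          vkFun_congr N hNc hd1 hd2 z]
        exact Submodule.mem_iSup_of_mem ⟨j, hj⟩ ⟨z, rfl⟩
      · rw [show vkFun N ((g.1.val : ℤ), (g.2.val : ℤ)) z = vkFun N j ((starRingEnd ℂ) z) from
          vkFun_congr_neg N hNc hs1 hs2 z]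
        exact Submodule.mem_iSup_of_mem ⟨j, hj⟩ ⟨(starRingEnd ℂ) z, rfl⟩
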